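/- Define, for a sequence of positive reals q_0 = 1, q_1, q_2, ..., the quantities T(n,m) = sum over k from 0 to m of (-1)^k * C(m,k) * (1/q_{n-k}) for m <= n. If T(n,n) >= 0 for all n (with T(0,0) = 1), then T(n,m) >= 0 for all m <= n. -/

import Mathlib

open Finset

/-- `T q n m = ∑_{k=0}^m (-1)^k C(m,k) / q_{n-k}`. -/
noncomputable def T (q : ℕ → ℝ) (n m : ℕ) : ℝ :=
  ∑ k ∈ range (m + 1), (-1 : ℝ) ^ k * (m.choose k) * (1 / q (n - k))

lemma T_pascal (q : ℕ → ℝ) (n m : ℕ) :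
    T q n (m + 1) = T q n m - T q (n - 1) m := by
  have h1 : T q n (m + 1)
      = (∑ k ∈ range (m + 1),
          (-1 : ℝ) ^ (k+1) * ((m+1).choose (k+1)) * (1 / q (n - (k+1)))) +
        (-1 : ℝ) ^ 0 * ((m+1).choose 0) * (1 / q (n - 0)) :=
    Finset.sum_range_succ' (fun k => (-1 : ℝ) ^ k * ((m+1).choose k) * (1 / q (n - k))) (m+1)
  have h2 : ∀ k ∈ range (m + 1),
      (-1 : ℝ) ^ (k+1) * ((m+1).choose (k+1)) * (1 / q (n - (k+1)))
      = -((-1 : ℝ) ^ k * (m.choose k) * (1 / q (n - 1 - k)))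
        + (-1 : ℝ) ^ (k+1) * (m.choose (k+1)) * (1 / q (n - (k+1))) := by
    intro k _
    have : n - (k+1) = n - 1 - k := by omega
    rw [this, Nat.choose_succ_succ]
    push_cast
    ring
  rw [Finset.sum_congr rfl h2, Finset.sum_add_distrib] at h1
  have h3 : ∑ k ∈ range (m + 1),
      (-1 : ℝ) ^ (k+1) * (m.choose (k+1)) * (1 / q (n - (k+1)))
      = T q n m - (-1 : ℝ) ^ 0 * (m.choose 0) * (1 / q (n - 0)) := by
    have h5 := Finset.sum_range_succ' (fun k => (-1 : ℝ) ^ k * (m.choose k) * (1 / q (n - k))) (m+1)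
    have h4 : ∑ k ∈ range (m + 2), (-1 : ℝ) ^ k * (m.choose k) * (1 / q (n - k))
        = T q n m := by
      rw [Finset.sum_range_succ, Nat.choose_succ_self]
      simp [T]
    rw [h4] at h5
    linarith
  rw [h3] at h1
  have h6 : ∑ x ∈ range (m + 1), -((-1:ℝ) ^ x * (m.choose x) * (1 / q (n - 1 - x)))
      = - T q (n - 1) m := by
    rw [T]; exact Finset.sum_neg_distrib _
  rw [h6] at h1
  norm_num at h1
  linarith

theorem stmt6 (q : ℕ → ℝ) (hq0 : q 0 = 1) (hqpos : ∀ n, 0 < q n)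
    (hdiag : ∀ n, 0 ≤ T q n n) :
    ∀ n m, m ≤ n → 0 ≤ T q n m := by
  intro n
  induction n with
  | zero =>
    intro m hm
    interval_cases m
    exact hdiag 0
  | succ n ih =>
    intro m hm
    have key : ∀ j m, m + j = n + 1 → 0 ≤ T q (n + 1) m := by
      intro j
      induction j with
      | zero =>
        intro m hm
        have h : m = n + 1 := by omega
        rw [h]; exact hdiag (n+1)
      | succ j ihj =>
        intro m hm
        have h1 : 0 ≤ T q (n + 1) (m + 1) := ihj (m + 1) (by omega)
        have h2 : 0 ≤ T q n m := ih m (by omega)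
        have := T_pascal q (n + 1) m
        simp only [Nat.add_sub_cancel] at this
        linarith
    exact key (n + 1 - m) m (by omega)
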